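/- Let P be the uniform distribution on [a,b] with a < b, and let β = {a,b}. For every n ∈ ℕ with n ≥ 2, the n-th conditional unconstrained quantization error for P with respect to β equals (b−a)²/(12(n−1)²), and this infimum is attained by the set {a + (j−1)(b−a)/(n−1) : 1 ≤ j ≤ n}. -/

import Mathlib

open MeasureTheory Set Filter

/-- The uniform distribution on `[a, b]`: normalized Lebesgue measure restricted to `[a, b]`. -/
noncomputable def uniformOn (a b : ℝ) : Measure ℝ :=
  (ENNReal.ofReal (b - a))⁻¹ • volume.restrict (Set.Icc a b)

/-- The distortion error of a set `s` of points for the measure `P`. -/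
noncomputable def distortion (P : Measure ℝ) (s : Set ℝ) : ℝ :=
  ∫ x, sInf ((fun a => (x - a) ^ 2) '' s) ∂P

/-- The `n`-th conditional (unconstrained) quantization error for `P` with respect to
the conditional set `β`. -/
noncomputable def condQuantError (P : Measure ℝ) (β : Set ℝ) (n : ℕ) : ℝ :=
  sInf { v : ℝ | ∃ α : Set ℝ, α.Finite ∧ α.ncard ≤ n - β.ncard ∧ v = distortion P (α ∪ β) }

noncomputable def nd (s : Set ℝ) (x : ℝ) : ℝ := sInf ((fun a => (x - a) ^ 2) '' s)

lemma nd_nonneg (s : Set ℝ) (x : ℝ) : 0 ≤ nd s x := by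
  rcases s.eq_empty_or_nonempty with h | h
  · simp [nd, h, Real.sInf_empty]
  · exact le_csInf (h.image _) (by rintro v ⟨t, _, rfl⟩; positivity)

lemma nd_le (s : Set ℝ) (hs : s.Finite) {t : ℝ} (ht : t ∈ s) (x : ℝ) :
    nd s x ≤ (x - t) ^ 2 :=
  csInf_le (hs.image _).bddBelow ⟨t, ht, rfl⟩

lemma nd_exists (s : Set ℝ) (hs : s.Finite) (hne : s.Nonempty) (x : ℝ) :
    ∃ t ∈ s, nd s x = (x - t) ^ 2 := by
  have := (hne.image (fun a => (x - a) ^ 2)).csInf_mem (hs.image _)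
  obtain ⟨t, ht, h⟩ := this
  exact ⟨t, ht, h.symm⟩

lemma nd_singleton (t x : ℝ) : nd {t} x = (x - t) ^ 2 := by simp [nd]

lemma nd_insert (t : ℝ) (s : Set ℝ) (hs : s.Finite) (hne : s.Nonempty) (x : ℝ) :
    nd (insert t s) x = min ((x - t) ^ 2) (nd s x) := by
  rw [nd, image_insert_eq, csInf_insert (hs.image _).bddBelow (hne.image _)]
  rfl

lemma nd_continuous (s : Set ℝ) (hs : s.Finite) (hne : s.Nonempty) : Continuous (nd s) := by
  refine Set.Finite.induction_on (motive := fun s _ => s.Nonempty → Continuous (nd s)) s hs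
    (by rintro ⟨x, hx⟩; exact absurd hx (notMem_empty x)) ?_ hne
  rintro t s hts hsf ih -
  rcases s.eq_empty_or_nonempty with rfl | h
  · simpa [funext fun x => nd_singleton t x] using (by fun_prop : Continuous fun x : ℝ => (x - t) ^ 2)
  · have : nd (insert t s) = fun x => min ((x - t) ^ 2) (nd s x) := by
      funext x; exact nd_insert t s hsf h x
    rw [this]
    exact (((continuous_id.sub continuous_const).pow 2)).min (ih h)

lemma nd_gap (s : Set ℝ) (hs : s.Finite) {c d : ℝ} (hc : c ∈ s) (hd : d ∈ s)
    (hgap : s ∩ Ioo c d = ∅) {x : ℝ} (hx : x ∈ Icc c d) :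
    nd s x = min ((x - c) ^ 2) ((x - d) ^ 2) := by
  refine le_antisymm (le_min (nd_le s hs hc x) (nd_le s hs hd x)) ?_
  obtain ⟨t, ht, he⟩ := nd_exists s hs ⟨c, hc⟩ x
  rw [he]
  have htn : t ∉ Ioo c d := fun h => (eq_empty_iff_forall_notMem.1 hgap t) ⟨ht, h⟩
  rcases lt_or_ge t d with h1 | h1
  · have htc : t ≤ c := by
      by_contra h2; exact htn ⟨lt_of_not_ge h2, h1⟩
    calc min ((x - c) ^ 2) ((x - d) ^ 2) ≤ (x - c) ^ 2 := min_le_left _ _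
      _ ≤ (x - t) ^ 2 := by nlinarith [hx.1, hx.2]
  · calc min ((x - c) ^ 2) ((x - d) ^ 2) ≤ (x - d) ^ 2 := min_le_right _ _
      _ ≤ (x - t) ^ 2 := by nlinarith [hx.1, hx.2]

lemma integral_min_sq {c d : ℝ} (hcd : c ≤ d) :
    ∫ x in Icc c d, min ((x - c) ^ 2) ((x - d) ^ 2) = (d - c) ^ 3 / 12 := by
  have hcont : Continuous fun x : ℝ => min ((x - c) ^ 2) ((x - d) ^ 2) :=
    ((continuous_id.sub continuous_const).pow 2).min ((continuous_id.sub continuous_const).pow 2)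
  set m := (c + d) / 2 with hm
  have hcm : c ≤ m := by simp [hm]; linarith
  have hmd : m ≤ d := by simp [hm]; linarith
  rw [MeasureTheory.integral_Icc_eq_integral_Ioc, ← intervalIntegral.integral_of_le hcd]
  rw [← intervalIntegral.integral_add_adjacent_intervals (b := m)
    (hcont.intervalIntegrable c m) (hcont.intervalIntegrable m d)]
  have h1 : ∫ x in c..m, min ((x - c) ^ 2) ((x - d) ^ 2) = ∫ x in c..m, (x - c) ^ 2 := by
    apply intervalIntegral.integral_congr
    intro x hx
    rw [uIcc_of_le hcm] at hx
    have : (x - c) ^ 2 ≤ (x - d) ^ 2 := by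
      have := hx.1; have := hx.2; simp only [hm] at *; nlinarith
    simp [min_eq_left this]
  have h2 : ∫ x in m..d, min ((x - c) ^ 2) ((x - d) ^ 2) = ∫ x in m..d, (x - d) ^ 2 := by
    apply intervalIntegral.integral_congr
    intro x hx
    rw [uIcc_of_le hmd] at hx
    have : (x - d) ^ 2 ≤ (x - c) ^ 2 := by
      have := hx.1; have := hx.2; simp only [hm] at *; nlinarith
    simp [min_eq_right this]
  rw [h1, h2]
  have e1 : ∫ x in c..m, (x - c) ^ 2 = (m - c) ^ 3 / 3 := by
    rw [intervalIntegral.integral_comp_sub_right (fun x => x ^ 2) c]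
    simp [integral_pow]
    ring
  have e2 : ∫ x in m..d, (x - d) ^ 2 = -((m - d) ^ 3 / 3) := by
    rw [intervalIntegral.integral_comp_sub_right (fun x => x ^ 2) d]
    simp [integral_pow]
    ring
  rw [e1, e2, hm]
  ring

lemma integral_nd_gap (s : Set ℝ) (hs : s.Finite) {c d : ℝ} (hcd : c ≤ d) (hc : c ∈ s)
    (hd : d ∈ s) (hgap : s ∩ Ioo c d = ∅) :
    ∫ x in Icc c d, nd s x = (d - c) ^ 3 / 12 := by
  rw [← integral_min_sq hcd]
  exact setIntegral_congr_fun measurableSet_Icc (fun x hx => nd_gap s hs hc hd hgap hx)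

lemma integral_nd_split (s : Set ℝ) (hs : s.Finite) (hne : s.Nonempty) {c t d : ℝ}
    (h1 : c ≤ t) (h2 : t ≤ d) :
    ∫ x in Icc c d, nd s x = (∫ x in Icc c t, nd s x) + ∫ x in Icc t d, nd s x := by
  have hcont := nd_continuous s hs hne
  rw [MeasureTheory.integral_Icc_eq_integral_Ioc, MeasureTheory.integral_Icc_eq_integral_Ioc,
    MeasureTheory.integral_Icc_eq_integral_Ioc, ← Set.Ioc_union_Ioc_eq_Ioc h1 h2,
    MeasureTheory.setIntegral_union (Set.Ioc_disjoint_Ioc_of_le le_rfl) measurableSet_Ioc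
      (hcont.integrableOn_Icc.mono_set Set.Ioc_subset_Icc_self)
      (hcont.integrableOn_Icc.mono_set Set.Ioc_subset_Icc_self)]

lemma radon {x y p q : ℝ} (hx : 0 ≤ x) (hy : 0 ≤ y) (hp : 0 < p) (hq : 0 < q) :
    (x + y) ^ 3 / (p + q) ^ 2 ≤ x ^ 3 / p ^ 2 + y ^ 3 / q ^ 2 := by
  rw [div_add_div _ _ (by positivity) (by positivity),
    div_le_div_iff₀ (by positivity) (by positivity)]
  nlinarith [mul_nonneg (mul_nonneg (mul_pos hp hq).le (add_nonneg hx hy))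
      (sq_nonneg (x * q - y * p)),
    mul_nonneg (sq_nonneg (x * q - y * p))
      (add_nonneg (mul_nonneg hy (sq_nonneg p)) (mul_nonneg hx (sq_nonneg q)))]

lemma radon12 {x y p q : ℝ} (hx : 0 ≤ x) (hy : 0 ≤ y) (hp : 0 < p) (hq : 0 < q) :
    (x + y) ^ 3 / (12 * (p + q) ^ 2) ≤ x ^ 3 / (12 * p ^ 2) + y ^ 3 / (12 * q ^ 2) := by
  have h := radon hx hy hp hq
  calc (x + y) ^ 3 / (12 * (p + q) ^ 2) = ((x + y) ^ 3 / (p + q) ^ 2) / 12 := by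
        rw [div_div]; ring_nf
    _ ≤ (x ^ 3 / p ^ 2 + y ^ 3 / q ^ 2) / 12 := by linarith
    _ = x ^ 3 / (12 * p ^ 2) + y ^ 3 / (12 * q ^ 2) := by rw [add_div, div_div, div_div]; ring_nf

lemma nd_lb : ∀ m : ℕ, ∀ s : Set ℝ, s.Finite → ∀ c d : ℝ, c < d → c ∈ s → d ∈ s →
    (s ∩ Ioo c d).ncard ≤ m →
    (d - c) ^ 3 / (12 * ((m : ℝ) + 1) ^ 2) ≤ ∫ x in Icc c d, nd s x := by
  intro m
  induction m using Nat.strong_induction_on with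
  | _ m ih =>
    intro s hs c d hcd hc hd hcard
    rcases (s ∩ Ioo c d).eq_empty_or_nonempty with hgap | ⟨t, hts, htoo⟩
    · rw [integral_nd_gap s hs hcd.le hc hd hgap]
      have h1 : (0:ℝ) < 12 := by norm_num
      have h2 : (12:ℝ) ≤ 12 * ((m : ℝ) + 1) ^ 2 := by
        nlinarith [Nat.cast_nonneg (α := ℝ) m]
      have h3 : (0:ℝ) ≤ (d - c) ^ 3 := pow_nonneg (by linarith) 3
      exact div_le_div_of_nonneg_left h3 h1 h2
    · set A := s ∩ Ioo c t with hA
      set B := s ∩ Ioo t d with hB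
      have hAf : A.Finite := hs.inter_of_left _
      have hBf : B.Finite := hs.inter_of_left _
      have htA : t ∉ A ∪ B := by
        rintro (⟨-, h⟩ | ⟨-, h⟩)
        · exact absurd h.2 (lt_irrefl t)
        · exact absurd h.1 (lt_irrefl t)
      have hdisj : Disjoint A B := by
        apply Set.disjoint_left.2
        rintro x ⟨-, hx1⟩ ⟨-, hx2⟩
        exact absurd (hx1.2.trans hx2.1) (lt_irrefl x)
      have hsub : insert t (A ∪ B) ⊆ s ∩ Ioo c d := by
        rintro x (rfl | ⟨hx, h⟩ | ⟨hx, h⟩)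
        · exact ⟨hts, htoo⟩
        · exact ⟨hx, h.1, h.2.trans htoo.2⟩
        · exact ⟨hx, htoo.1.trans h.1, h.2⟩
      set m1 := A.ncard with hm1
      set m2 := B.ncard with hm2
      have hcount : m1 + m2 + 1 ≤ m := by
        have h1 : (insert t (A ∪ B)).ncard ≤ (s ∩ Ioo c d).ncard :=
          Set.ncard_le_ncard hsub (hs.inter_of_left _)
        have h2 : (insert t (A ∪ B)).ncard = (A ∪ B).ncard + 1 :=
          Set.ncard_insert_of_notMem htA (hAf.union hBf)
        have h3 : (A ∪ B).ncard = m1 + m2 := Set.ncard_union_eq hdisj hAf hBf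
        omega
      have ih1 := ih m1 (by omega) s hs c t htoo.1 hc hts le_rfl
      have ih2 := ih m2 (by omega) s hs t d htoo.2 hts hd le_rfl
      have hsplit := integral_nd_split s hs ⟨c, hc⟩ htoo.1.le htoo.2.le
      have hr : (d - c) ^ 3 / (12 * ((m : ℝ) + 1) ^ 2)
          ≤ (t - c) ^ 3 / (12 * ((m1 : ℝ) + 1) ^ 2) + (d - t) ^ 3 / (12 * ((m2 : ℝ) + 1) ^ 2) := by
        have h0 : (d : ℝ) - c = (t - c) + (d - t) := by ring
        have hrad := radon12 (x := t - c) (y := d - t) (p := (m1 : ℝ) + 1) (q := (m2 : ℝ) + 1)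
          (by linarith [htoo.1]) (by linarith [htoo.2])
          (by positivity) (by positivity)
        refine le_trans ?_ (h0 ▸ hrad)
        have hle : ((m1 : ℝ) + 1) + ((m2 : ℝ) + 1) ≤ (m : ℝ) + 1 := by
          have : (m1 : ℝ) + (m2 : ℝ) + 1 ≤ (m : ℝ) := by exact_mod_cast hcount
          linarith
        have hpos : (0:ℝ) < ((m1 : ℝ) + 1) + ((m2 : ℝ) + 1) := by positivity
        apply div_le_div_of_nonneg_left (pow_nonneg (by linarith [htoo.1, htoo.2]) 3) (by positivity)
        nlinarith
      rw [hsplit]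
      exact hr.trans (add_le_add ih1 ih2)

lemma grid_integral (a b : ℝ) (hab : a < b) (n : ℕ) (hn : 2 ≤ n) :
    ∫ x in Icc a b,
        nd ((fun j : ℕ => a + ((j : ℝ) - 1) * (b - a) / ((n : ℝ) - 1)) '' Set.Icc 1 n) x
      = ((n : ℝ) - 1) * ((b - a) / ((n : ℝ) - 1)) ^ 3 / 12 := by
  have hn1 : (1:ℝ) ≤ (n:ℝ) - 1 := by
    have : (2:ℝ) ≤ (n:ℝ) := by exact_mod_cast hn
    linarith
  set δ : ℝ := (b - a) / ((n : ℝ) - 1) with hδdef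
  have hδ : 0 < δ := div_pos (by linarith) (by linarith)
  set g : ℕ → ℝ := fun j => a + ((j : ℝ) - 1) * (b - a) / ((n : ℝ) - 1) with hg
  have hgδ : ∀ j : ℕ, g j = a + ((j : ℝ) - 1) * δ := by
    intro j; simp only [hg, hδdef]; ring
  set G : Set ℝ := g '' Set.Icc 1 n with hG
  have hGf : G.Finite := (Set.finite_Icc 1 n).image g
  have hg1 : g 1 = a := by simp [hgδ]
  have hgn : g n = b := by
    rw [hgδ, hδdef]; field_simp; ring
  have hGne : G.Nonempty := ⟨g 1, 1, ⟨le_refl 1, by omega⟩, rfl⟩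
  have hmono : ∀ j k : ℕ, j ≤ k → g j ≤ g k := by
    intro j k h
    rw [hgδ, hgδ]
    have : (j:ℝ) ≤ (k:ℝ) := by exact_mod_cast h
    nlinarith
  -- main induction
  have key : ∀ i : ℕ, 1 ≤ i → i ≤ n →
      ∫ x in Icc a (g i), nd G x = ((i : ℝ) - 1) * δ ^ 3 / 12 := by
    intro i
    induction i with
    | zero => omega
    | succ i ihi =>
      intro h1 h2
      rcases Nat.eq_or_lt_of_le h1 with h | h
      · rw [← h, hg1]
        simp [Real.volume_Icc]
      · have hi1 : 1 ≤ i := by omega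
        have hin : i ≤ n := by omega
        have hgap : G ∩ Ioo (g i) (g (i + 1)) = ∅ := by
          rw [Set.eq_empty_iff_forall_notMem]
          rintro x ⟨⟨j, hj, rfl⟩, hx1, hx2⟩
          simp only [hgδ] at hx1 hx2
          have hji : (j:ℝ) < (i:ℝ) + 1 := by push_cast at hx2 ⊢; nlinarith
          have : j ≤ i := by exact_mod_cast Nat.lt_succ_iff.mp (by exact_mod_cast hji)
          have : (j:ℝ) ≤ (i:ℝ) := by exact_mod_cast this
          nlinarith
        have hmem_i : g i ∈ G := ⟨i, ⟨hi1, hin⟩, rfl⟩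
        have hmem_i1 : g (i + 1) ∈ G := ⟨i + 1, ⟨by omega, h2⟩, rfl⟩
        have hii1 : g i ≤ g (i + 1) := hmono i (i + 1) (by omega)
        have hai : a ≤ g i := hg1 ▸ hmono 1 i hi1
        rw [integral_nd_split G hGf hGne hai hii1, ihi hi1 hin,
          integral_nd_gap G hGf hii1 hmem_i hmem_i1 hgap]
        rw [hgδ, hgδ]
        push_cast
        ring
  have := key n (by omega) le_rfl
  rw [hgn] at this
  rw [this, hδdef]

lemma distortion_eq (a b : ℝ) (hab : a < b) (s : Set ℝ) :
    distortion (uniformOn a b) s = (b - a)⁻¹ * ∫ x in Icc a b, nd s x := by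
  have : distortion (uniformOn a b) s = ∫ x, nd s x ∂(uniformOn a b) := rfl
  rw [this, uniformOn, integral_smul_measure, ENNReal.toReal_inv,
    ENNReal.toReal_ofReal (by linarith : (0:ℝ) ≤ b - a), smul_eq_mul]

lemma nd_inter (s : Set ℝ) (hs : s.Finite) {a b : ℝ} (ha : a ∈ s) (hb : b ∈ s)
    {x : ℝ} (hx : x ∈ Icc a b) : nd s x = nd (s ∩ Icc a b) x := by
  have hab : a ≤ b := hx.1.trans hx.2
  have haI : a ∈ s ∩ Icc a b := ⟨ha, le_refl a, hab⟩
  have hbI : b ∈ s ∩ Icc a b := ⟨hb, hab, le_refl b⟩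
  refine le_antisymm ?_ ?_
  · exact csInf_le_csInf (hs.image _).bddBelow ⟨_, a, haI, rfl⟩
      (image_mono inter_subset_left)
  · obtain ⟨t, ht, he⟩ := nd_exists s hs ⟨a, ha⟩ x
    rw [he]
    rcases le_or_gt t a with h1 | h1
    · calc nd (s ∩ Icc a b) x ≤ (x - a) ^ 2 := nd_le _ (hs.inter_of_left _) haI x
        _ ≤ (x - t) ^ 2 := by nlinarith [hx.1, hx.2]
    · rcases le_or_gt t b with h2 | h2
      · exact nd_le (s ∩ Icc a b) (hs.inter_of_left _) (Set.mem_inter ht ⟨h1.le, h2⟩) x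
      · calc nd (s ∩ Icc a b) x ≤ (x - b) ^ 2 := nd_le _ (hs.inter_of_left _) hbI x
          _ ≤ (x - t) ^ 2 := by nlinarith [hx.1, hx.2]

/-- Conditional quantization for the uniform distribution on `[a,b]` with conditional set `{a,b}`:
the error is `(b-a)²/(12(n-1)²)`, attained by the set `{a + (j-1)(b-a)/(n-1) : 1 ≤ j ≤ n}`. -/
theorem stmt2 (a b : ℝ) (hab : a < b) (n : ℕ) (hn : 2 ≤ n) :
    condQuantError (uniformOn a b) {a, b} n = (b - a) ^ 2 / (12 * ((n : ℝ) - 1) ^ 2)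
    ∧ distortion (uniformOn a b)
        ((fun j : ℕ => a + ((j : ℝ) - 1) * (b - a) / ((n : ℝ) - 1)) '' Set.Icc 1 n)
      = (b - a) ^ 2 / (12 * ((n : ℝ) - 1) ^ 2) := by
  have hn1 : (2:ℝ) ≤ (n:ℝ) := by exact_mod_cast hn
  have hba : (0:ℝ) < b - a := by linarith
  set g : ℕ → ℝ := fun j => a + ((j : ℝ) - 1) * (b - a) / ((n : ℝ) - 1) with hg
  set G : Set ℝ := g '' Set.Icc 1 n with hG
  set V : ℝ := (b - a) ^ 2 / (12 * ((n : ℝ) - 1) ^ 2) with hV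
  have hne1 : b - a ≠ 0 := ne_of_gt hba
  have hne2 : (n : ℝ) - 1 ≠ 0 := by intro h; nlinarith
  have hg1 : g 1 = a := by simp only [hg]; norm_num
  have hgn : g n = b := by
    simp only [hg]; field_simp; ring
  -- Part 2
  have part2 : distortion (uniformOn a b) G = V := by
    rw [distortion_eq a b hab, hG, hg, grid_integral a b hab n hn, hV]
    field_simp
  -- membership
  have hβ : ({a, b} : Set ℝ).ncard = 2 := Set.ncard_pair hab.ne
  have hmem : V ∈ { v : ℝ | ∃ α : Set ℝ, α.Finite ∧
      α.ncard ≤ n - ({a, b} : Set ℝ).ncard ∧ v = distortion (uniformOn a b) (α ∪ {a, b}) } := by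
    refine ⟨g '' Set.Icc 2 (n - 1), (Set.finite_Icc _ _).image g, ?_, ?_⟩
    · rw [hβ]
      calc (g '' Set.Icc 2 (n-1)).ncard ≤ (Set.Icc 2 (n-1)).ncard :=
            Set.ncard_image_le (Set.finite_Icc _ _)
        _ = n - 2 := by
            rw [← Finset.coe_Icc, Set.ncard_coe_finset, Nat.card_Icc]; omega
    · have hunion : g '' Set.Icc 2 (n - 1) ∪ {a, b} = G := by
        ext x
        constructor
        · rintro (⟨j, hj, rfl⟩ | rfl | rfl)
          · obtain ⟨hj1, hj2⟩ := hj
            exact ⟨j, ⟨by omega, by omega⟩, rfl⟩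
          · exact ⟨1, ⟨le_refl 1, by omega⟩, hg1⟩
          · exact ⟨n, ⟨by omega, le_refl n⟩, hgn⟩
        · rintro ⟨j, hj, rfl⟩
          obtain ⟨hj1, hj2⟩ := hj
          rcases eq_or_lt_of_le hj1 with h1 | h1
          · exact Or.inr (Or.inl (by rw [← h1, hg1]))
          · rcases eq_or_lt_of_le hj2 with h2 | h2
            · exact Or.inr (Or.inr (by rw [h2, hgn]; exact Set.mem_singleton b))
            · exact Or.inl ⟨j, ⟨by omega, by omega⟩, rfl⟩
      rw [hunion, part2]
  -- lower bound
  have hlb : ∀ v ∈ { v : ℝ | ∃ α : Set ℝ, α.Finite ∧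
      α.ncard ≤ n - ({a, b} : Set ℝ).ncard ∧ v = distortion (uniformOn a b) (α ∪ {a, b}) },
      V ≤ v := by
    rintro v ⟨α, hαf, hαc, rfl⟩
    rw [hβ] at hαc
    set s := α ∪ {a, b} with hs
    have hsf : s.Finite := hαf.union ((Set.finite_singleton b).insert a)
    have has : a ∈ s := Or.inr (Or.inl rfl)
    have hbs : b ∈ s := Or.inr (Or.inr rfl)
    set s' := s ∩ Icc a b with hs'
    have hs'f : s'.Finite := hsf.inter_of_left _
    have has' : a ∈ s' := ⟨has, le_refl a, hab.le⟩
    have hbs' : b ∈ s' := ⟨hbs, hab.le, le_refl b⟩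
    have hcongr : ∫ x in Icc a b, nd s x = ∫ x in Icc a b, nd s' x :=
      setIntegral_congr_fun measurableSet_Icc (fun x hx => nd_inter s hsf has hbs hx)
    have hcard : (s' ∩ Ioo a b).ncard ≤ n - 2 := by
      refine le_trans (Set.ncard_le_ncard ?_ hαf) hαc
      rintro x ⟨⟨hx1 | hx2, -⟩, hx3⟩
      · exact hx1
      · rcases hx2 with rfl | rfl
        · exact absurd hx3.1 (lt_irrefl x)
        · exact absurd hx3.2 (lt_irrefl x)
    have hlow := nd_lb (n - 2) s' hs'f a b hab has' hbs' hcard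
    have hcast : ((n - 2 : ℕ) : ℝ) + 1 = (n : ℝ) - 1 := by
      have : ((n - 2 : ℕ) : ℝ) = (n : ℝ) - 2 := by
        push_cast [Nat.cast_sub hn]; ring
      rw [this]; ring
    rw [hcast] at hlow
    rw [distortion_eq a b hab, hcongr]
    calc V = (b - a)⁻¹ * ((b - a) ^ 3 / (12 * ((n : ℝ) - 1) ^ 2)) := by
          rw [hV]; field_simp
      _ ≤ (b - a)⁻¹ * ∫ x in Icc a b, nd s' x :=
          mul_le_mul_of_nonneg_left hlow (by positivity)
  refine ⟨?_, part2⟩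
  rw [condQuantError]
  exact le_antisymm (csInf_le ⟨V, hlb⟩ hmem) (le_csInf ⟨V, hmem⟩ hlb)
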